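/- arXiv:2210.05984 — 2 statements merged into one kernel-verified Lean document; each statement's English description precedes it below -/
import Mathlib

section
/- (Translation invariance of TING, Lemma 2 part 1.) For every function f : ℝ × ℝ → ℝ, every d = (d₁, d₂) : ℝ × ℝ and all θ, ω : ℝ, the TING of the translated image equals the TING of f: M (fun p => f (p - d)) θ ω = M f θ ω. No integrability hypotheses on f are needed: the Radon transform of the translated image is a τ-shift of R f θ, and shifting a function changes its Fourier integral only by a unimodular factor, leaving the magnitude unchanged. -/
open MeasureTheory Real

/-- Radon transform of an image `f : ℝ × ℝ → ℝ`. -/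
noncomputable def Radon (f : ℝ × ℝ → ℝ) (θ τ : ℝ) : ℝ :=
  ∫ t : ℝ, f (τ * Real.cos θ - t * Real.sin θ, τ * Real.sin θ + t * Real.cos θ)

/-- TING of `f`: magnitude of the Fourier integral (along `τ`) of the sinogram row `θ`. -/
noncomputable def TING (f : ℝ × ℝ → ℝ) (θ ω : ℝ) : ℝ :=
  ‖FourierTransform.fourier (fun τ => (Radon f θ τ : ℂ)) ω‖

lemma Radon_translate (f : ℝ × ℝ → ℝ) (d : ℝ × ℝ) (θ τ : ℝ) :
    Radon (fun p => f (p - d)) θ τ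
      = Radon f θ (τ - (d.1 * Real.cos θ + d.2 * Real.sin θ)) := by
  unfold Radon
  rw [← MeasureTheory.integral_add_right_eq_self
    (fun t : ℝ => f ((τ - (d.1 * Real.cos θ + d.2 * Real.sin θ)) * Real.cos θ - t * Real.sin θ,
      (τ - (d.1 * Real.cos θ + d.2 * Real.sin θ)) * Real.sin θ + t * Real.cos θ))
    (d.1 * Real.sin θ - d.2 * Real.cos θ)]
  congr 1
  funext t
  have h1 : Real.sin θ ^ 2 + Real.cos θ ^ 2 = 1 := Real.sin_sq_add_cos_sq θ
  apply congrArg f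
  apply Prod.ext <;> simp only [Prod.mk_sub_mk, Prod.fst_sub, Prod.snd_sub] <;>
    [linear_combination Prod.fst d * h1; linear_combination Prod.snd d * h1]

/-- Translation invariance of TING (Lemma 2, part 1). -/
theorem TING_translation_invariant (f : ℝ × ℝ → ℝ) (d : ℝ × ℝ) (θ ω : ℝ) :
    TING (fun p => f (p - d)) θ ω = TING f θ ω := by
  set c := d.1 * Real.cos θ + d.2 * Real.sin θ
  unfold TING
  have hfun : (fun τ => (Radon (fun p => f (p - d)) θ τ : ℂ))
      = (fun τ => (Radon f θ τ : ℂ)) ∘ (fun τ => τ + (-c)) := by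
    funext τ
    simp only [Function.comp_apply]
    rw [Radon_translate, sub_eq_add_neg]
  rw [hfun]
  change ‖VectorFourier.fourierIntegral Real.fourierChar volume (innerₗ ℝ) _ ω‖
    = ‖VectorFourier.fourierIntegral Real.fourierChar volume (innerₗ ℝ) _ ω‖
  rw [VectorFourier.fourierIntegral_comp_add_right Real.fourierChar volume (innerₗ ℝ) _ (-c)]
  rw [Circle.norm_smul]
end

section
/- (Roto-translation behaviour of TING.) For every function f : ℝ × ℝ → ℝ, every α : ℝ, every d = (d₁, d₂) : ℝ × ℝ and all θ, ω : ℝ, the TING of the roto-translated image g : ℝ × ℝ → ℝ defined by g p = f (ρ (-α) (p - d)) satisfies M g θ ω = M f (θ - α) ω. Thus TING is invariant to translation and equivariant (by a θ-shift) to rotation. No integrability hypotheses on f are needed. -/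
open MeasureTheory Real

/-- Rotation of the plane by angle `α`. -/
noncomputable def ρ (α : ℝ) (p : ℝ × ℝ) : ℝ × ℝ :=
  (p.1 * Real.cos α - p.2 * Real.sin α, p.1 * Real.sin α + p.2 * Real.cos α)

lemma Radon_roto (f : ℝ × ℝ → ℝ) (α : ℝ) (d : ℝ × ℝ) (θ τ : ℝ)
    (g : ℝ × ℝ → ℝ) (hg : ∀ p, g p = f (ρ (-α) (p - d))) :
    Radon g θ τ = Radon f (θ - α) (τ - (d.1 * Real.cos θ + d.2 * Real.sin θ)) := by
  unfold Radon
  set τ' : ℝ := τ - (d.1 * Real.cos θ + d.2 * Real.sin θ) with hτ'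
  set s : ℝ := -d.1 * Real.sin θ + d.2 * Real.cos θ with hs
  have key : ∀ t : ℝ,
      g (τ * Real.cos θ - t * Real.sin θ, τ * Real.sin θ + t * Real.cos θ) =
      f (τ' * Real.cos (θ - α) - (t - s) * Real.sin (θ - α),
         τ' * Real.sin (θ - α) + (t - s) * Real.cos (θ - α)) := by
    intro t
    rw [hg]
    congr 1
    simp only [ρ, hτ', hs, Prod.mk.injEq, Prod.fst_sub, Prod.snd_sub, Real.cos_neg,
      Real.sin_neg, Real.cos_sub, Real.sin_sub]
    constructor
    · linear_combination (d.1 * Real.cos α + d.2 * Real.sin α) * Real.sin_sq_add_cos_sq θ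
    · linear_combination (d.2 * Real.cos α - d.1 * Real.sin α) * Real.sin_sq_add_cos_sq θ
  simp only [key]
  exact integral_sub_right_eq_self
    (fun t => f (τ' * Real.cos (θ - α) - t * Real.sin (θ - α),
      τ' * Real.sin (θ - α) + t * Real.cos (θ - α))) s

/-- TING is translation invariant and rotation equivariant (by a `θ`-shift). -/
theorem TING_rototranslation (f : ℝ × ℝ → ℝ) (α : ℝ) (d : ℝ × ℝ) (θ ω : ℝ)
    (g : ℝ × ℝ → ℝ) (hg : ∀ p, g p = f (ρ (-α) (p - d))) :
    TING g θ ω = TING f (θ - α) ω := by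
  unfold TING
  have h1 : (fun τ => (Radon g θ τ : ℂ)) =
      ((fun τ => (Radon f (θ - α) τ : ℂ)) ∘
        fun τ => τ + (-(d.1 * Real.cos θ + d.2 * Real.sin θ))) := by
    funext τ
    simp only [Function.comp_apply]
    rw [Radon_roto f α d θ τ g hg]
    ring_nf
  rw [h1]
  change ‖VectorFourier.fourierIntegral Real.fourierChar volume (innerₗ ℝ) _ ω‖ =
    ‖VectorFourier.fourierIntegral Real.fourierChar volume (innerₗ ℝ) _ ω‖
  rw [VectorFourier.fourierIntegral_comp_add_right,
    Circle.norm_smul]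
end
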